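/- arXiv:1705.07021 — 2 statements merged into one kernel-verified Lean document; each statement's English description precedes it below -/
import Mathlib

section
/- For every t ≥ 1 and every integer s with 0 ≤ s < p_t, s is a hole at level t (i.e. s ∉ Per_{p_t}(η)) if and only if 2^t | s and b_i ∤ s for every 1 ≤ i ≤ t. -/
open scoped BigOperators

-- The indicator function of the `\mathscr{B}`-free integers for
--`\mathscr{B} = {2^i b_i : i \ge 1}`. 
open Classical in
noncomputable def eta (b : ℕ → ℕ) : ℤ → ℕ := fun n =>
  if (∀ i : ℕ, 1 ≤ i → ¬ ((2 : ℤ) ^ i * (b i : ℤ) ∣ n)) then 1 else 0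

-- `Per x s` is the set of `s`-periodic positions of `x`. 
def Per (x : ℤ → ℕ) (s : ℕ) : Set ℤ := {n : ℤ | ∀ k : ℤ, x (n + k * s) = x n}

-- `pp b t = 2^t * b_1 * b_2 * \cdots * b_t`. 
def pp (b : ℕ → ℕ) (t : ℕ) : ℕ := 2 ^ t * ∏ i ∈ Finset.Icc 1 t, b i

open Classical in
lemma eta_eq_one (b : ℕ → ℕ) (n : ℤ)
    (h : ∀ i : ℕ, 1 ≤ i → ¬ ((2 : ℤ) ^ i * (b i : ℤ) ∣ n)) : eta b n = 1 := by
  unfold eta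
  split
  · rfl
  · next hc => exact absurd h hc

open Classical in
lemma eta_eq_zero (b : ℕ → ℕ) (n : ℤ) (i : ℕ) (hi : 1 ≤ i)
    (h : (2 : ℤ) ^ i * (b i : ℤ) ∣ n) : eta b n = 0 := by
  unfold eta
  split
  · next hc => exact absurd h (hc i hi)
  · rfl

lemma eta_congr (b : ℕ → ℕ) (n m : ℤ)
    (h : ∀ i : ℕ, 1 ≤ i → ((2 : ℤ) ^ i * (b i : ℤ) ∣ n ↔ (2 : ℤ) ^ i * (b i : ℤ) ∣ m)) :
    eta b n = eta b m := by
  classical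
  unfold eta
  exact if_congr (forall_congr' fun i => imp_congr_right fun hi => not_congr (h i hi)) rfl rfl

theorem hole_characterization (b : ℕ → ℕ)
    (hodd : ∀ i : ℕ, 1 ≤ i → Odd (b i))
    (hgt : ∀ i : ℕ, 1 ≤ i → 1 < b i)
    (hcop : ∀ i j : ℕ, 1 ≤ i → 1 ≤ j → i ≠ j → Nat.Coprime (b i) (b j))
    (t : ℕ) (ht : 1 ≤ t) (s : ℤ) (hs0 : 0 ≤ s) (hs1 : s < (pp b t : ℤ)) :
    s ∉ Per (eta b) (pp b t) ↔
      ((2 : ℤ) ^ t ∣ s ∧ ∀ i : ℕ, 1 ≤ i → i ≤ t → ¬ ((b i : ℤ) ∣ s)) := by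
  set M : ℕ := ∏ i ∈ Finset.Icc 1 t, b i with hMdef
  have hPcast : ((pp b t : ℕ) : ℤ) = 2 ^ t * (M : ℤ) := by
    rw [hMdef]; unfold pp; push_cast; ring
  have hModd : Odd M := by
    rw [← Nat.coprime_two_left]
    exact Nat.Coprime.prod_right fun i hi =>
      Nat.coprime_two_left.mpr (hodd i (Finset.mem_Icc.mp hi).1)
  have hbM : ∀ i : ℕ, 1 ≤ i → i ≤ t → ((b i : ℤ) ∣ (M : ℤ)) := by
    intro i h1 h2
    exact_mod_cast Int.natCast_dvd_natCast.mpr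
      (Finset.dvd_prod_of_mem b (Finset.mem_Icc.mpr ⟨h1, h2⟩))
  have hcop2 : ∀ i : ℕ, 1 ≤ i → IsCoprime ((b i : ℤ)) ((2 : ℤ) ^ t) := by
    intro i hi
    have : Nat.Coprime (b i) (2 ^ t) :=
      (Nat.coprime_two_right.mpr (hodd i hi)).pow_right t
    have := Nat.isCoprime_iff_coprime.mpr this
    push_cast at this; exact this
  have hdvdP : ∀ i : ℕ, 1 ≤ i → i ≤ t → (2 : ℤ) ^ i * (b i : ℤ) ∣ (pp b t : ℤ) := by
    intro i h1 h2
    rw [hPcast]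
    exact mul_dvd_mul (pow_dvd_pow 2 h2) (hbM i h1 h2)
  have hP2 : (2 : ℤ) ^ t ∣ (pp b t : ℤ) := by
    rw [hPcast]; exact dvd_mul_right _ _
  constructor
  · -- forward: contrapositive
    intro hnot
    by_contra hcon
    push_neg at hcon
    apply hnot
    intro k
    by_cases h2 : (2 : ℤ) ^ t ∣ s
    · obtain ⟨i0, hi1, hi2, hbi⟩ := hcon h2
      have hcp : IsCoprime ((2 : ℤ) ^ i0) ((b i0 : ℤ)) := by
        have : Nat.Coprime (2 ^ i0) (b i0) :=
          (Nat.coprime_two_left.mpr (hodd i0 hi1)).pow_left i0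
        have := Nat.isCoprime_iff_coprime.mpr this
        push_cast at this; exact this
      have hi0dvd : (2 : ℤ) ^ i0 * (b i0 : ℤ) ∣ s :=
        hcp.mul_dvd ((pow_dvd_pow 2 hi2).trans h2) hbi
      rw [eta_eq_zero b _ i0 hi1 (dvd_add hi0dvd ((hdvdP i0 hi1 hi2).mul_left k)),
        eta_eq_zero b s i0 hi1 hi0dvd]
    · -- 2^t ∤ s : eta is unchanged by shifts of pp
      have h2n : ¬ (2 : ℤ) ^ t ∣ s + k * (pp b t : ℤ) := by
        intro h
        apply h2
        have := dvd_sub h (hP2.mul_left k)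
        simpa using this
      apply eta_congr
      intro i hi
      rcases le_or_gt i t with hit | hit
      · constructor
        · intro h
          have := dvd_sub h ((hdvdP i hi hit).mul_left k)
          simpa using this
        · intro h
          exact dvd_add h ((hdvdP i hi hit).mul_left k)
      · constructor <;> intro h <;> exfalso
        · exact h2n ((pow_dvd_pow 2 hit.le).trans ((dvd_mul_right _ _).trans h))
        · exact h2 ((pow_dvd_pow 2 hit.le).trans ((dvd_mul_right _ _).trans h))
  · rintro ⟨h2, hb⟩ hper
    obtain ⟨s', hs'⟩ := h2
    -- shift making eta = 1
    have hkey : ∀ k : ℤ, Odd (s' + k * (M : ℤ)) → eta b (s + k * (pp b t : ℤ)) = 1 := by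
      intro k hoddk
      apply eta_eq_one
      intro i hi hdvd
      have hn : s + k * (pp b t : ℤ) = 2 ^ t * (s' + k * (M : ℤ)) := by
        rw [hs', hPcast]; ring
      rw [hn] at hdvd
      rcases le_or_gt i t with hit | hit
      · have hbd : (b i : ℤ) ∣ 2 ^ t * (s' + k * (M : ℤ)) := (dvd_mul_left _ _).trans hdvd
        have hbd2 : (b i : ℤ) ∣ s' + k * (M : ℤ) := (hcop2 i hi).dvd_of_dvd_mul_left hbd
        have hbs' : (b i : ℤ) ∣ s' := by
          have := dvd_sub hbd2 ((hbM i hi hit).mul_left k)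
          simpa using this
        exact hb i hi hit (hs' ▸ hbs'.mul_left _)
      · have h2d : (2 : ℤ) ^ t * 2 ∣ 2 ^ t * (s' + k * (M : ℤ)) := by
          have : (2 : ℤ) ^ (t + 1) ∣ 2 ^ t * (s' + k * (M : ℤ)) :=
            (pow_dvd_pow 2 hit).trans ((dvd_mul_right _ _).trans hdvd)
          rwa [pow_succ] at this
        have : (2 : ℤ) ∣ s' + k * (M : ℤ) :=
          (mul_dvd_mul_iff_left (by positivity : (2 : ℤ) ^ t ≠ 0)).mp h2d
        exact (Int.not_even_iff_odd.mpr hoddk) (even_iff_two_dvd.mpr this)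
    -- choose k1 with odd quotient
    have h1 : eta b s = 1 := by
      rw [← hper (s' + 1)]
      apply hkey
      obtain ⟨c, hc⟩ := hModd
      have hMz : (M : ℤ) = 2 * c + 1 := by exact_mod_cast hc
      rcases Int.even_or_odd s' with ⟨a, ha⟩ | ⟨a, ha⟩
      · exact ⟨2 * a + 2 * a * c + c, by rw [ha, hMz]; ring⟩
      · exact ⟨2 * a + 2 * a * c + 2 * c + 1, by rw [ha, hMz]; ring⟩
    -- choose k0 making it divisible by 2^(t+1) b_{t+1}
    have hcopM : IsCoprime ((M : ℤ)) ((2 : ℤ) * (b (t + 1) : ℤ)) := by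
      have hn : Nat.Coprime M (2 * b (t + 1)) := by
        apply Nat.Coprime.mul_right
        · exact Nat.coprime_two_right.mpr hModd
        · exact Nat.Coprime.prod_left fun i hi =>
            hcop i (t + 1) (Finset.mem_Icc.mp hi).1 (by omega)
              (by have := (Finset.mem_Icc.mp hi).2; omega)
      have := Nat.isCoprime_iff_coprime.mpr hn
      push_cast at this; exact this
    obtain ⟨u, v, huv⟩ := hcopM
    set k0 : ℤ := -(s' * u) with hk0
    have hdiv : (2 : ℤ) * (b (t + 1) : ℤ) ∣ s' + k0 * (M : ℤ) := by
      have : s' + k0 * (M : ℤ) = s' * (v * (2 * (b (t + 1) : ℤ))) := by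
        have h1 : v * (2 * (b (t + 1) : ℤ)) = 1 - u * (M : ℤ) := by linarith [huv]
        rw [h1, hk0]; ring
      rw [this]
      exact Dvd.dvd.mul_left ⟨v, by ring⟩ s'
    have h0 : eta b s = 0 := by
      rw [← hper k0]
      apply eta_eq_zero b _ (t + 1) (by omega)
      have hn : s + k0 * (pp b t : ℤ) = 2 ^ t * (s' + k0 * (M : ℤ)) := by
        rw [hs', hPcast]; ring
      rw [hn]
      obtain ⟨c, hc⟩ := hdiv
      exact ⟨c, by rw [hc]; ring⟩
    rw [h0] at h1
    exact one_ne_zero h1.symm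
end

section
/- The sequence η has property (Sh) (separated holes): the minimal cyclic gap k_t between consecutive holes at level t (i.e. min({I_{j+1} − I_j : 1 ≤ j ≤ s_t − 1} ∪ {p_t − I_{s_t} + I_1}), where I_1 < … < I_{s_t} list all holes at level t) tends to infinity as t → ∞. -/
open scoped BigOperators

-- `s` is a hole at level `t`. 
def Hole (b : ℕ → ℕ) (t : ℕ) (s : ℤ) : Prop :=
  0 ≤ s ∧ s < (pp b t : ℤ) ∧ s ∉ Per (eta b) (pp b t)

-- Any hole at level `t` is divisible by `2^t`.
lemma hole_dvd_pow (b : ℕ → ℕ) (t : ℕ) (u : ℤ) (hu : Hole b t u) :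
    (2 : ℤ) ^ t ∣ u := by
  classical
  obtain ⟨hu0, hup, hnp⟩ := hu
  have key : ∀ i : ℕ, 1 ≤ i → i ≤ t → ((2 : ℤ) ^ i * (b i : ℤ)) ∣ (pp b t : ℤ) := by
    intro i h1 h2
    have : 2 ^ i * b i ∣ pp b t :=
      mul_dvd_mul (pow_dvd_pow 2 h2)
        (Finset.dvd_prod_of_mem b (Finset.mem_Icc.mpr ⟨h1, h2⟩))
    exact_mod_cast this
  have h2pp : (2 : ℤ) ^ t ∣ (pp b t : ℤ) := by
    have : (2 : ℕ) ^ t ∣ pp b t := dvd_mul_right _ _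
    exact_mod_cast this
  simp only [Per, Set.mem_setOf_eq, not_forall] at hnp
  obtain ⟨k, hk⟩ := hnp
  by_cases hP : ∀ i : ℕ, 1 ≤ i → ¬ ((2 : ℤ) ^ i * (b i : ℤ) ∣ u)
  · have hP2 : ¬ ∀ i : ℕ, 1 ≤ i → ¬ ((2 : ℤ) ^ i * (b i : ℤ) ∣ (u + k * (pp b t : ℤ))) := by
      intro hc
      apply hk
      simp only [eta, if_pos hP, if_pos hc]
    push_neg at hP2
    obtain ⟨i, hi1, hdiv⟩ := hP2
    have hit : t < i := by
      by_contra hle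
      push_neg at hle
      refine hP i hi1 ?_
      have hkp : ((2 : ℤ) ^ i * (b i : ℤ)) ∣ k * (pp b t : ℤ) := (key i hi1 hle).mul_left k
      have := dvd_sub hdiv hkp
      simpa using this
    have h2a : (2 : ℤ) ^ t ∣ u + k * (pp b t : ℤ) :=
      dvd_trans (pow_dvd_pow 2 hit.le) (dvd_trans (dvd_mul_right _ _) hdiv)
    have h2b : (2 : ℤ) ^ t ∣ k * (pp b t : ℤ) := h2pp.mul_left k
    have := dvd_sub h2a h2b
    simpa using this
  · have hQ : ∀ i : ℕ, 1 ≤ i → ¬ ((2 : ℤ) ^ i * (b i : ℤ) ∣ (u + k * (pp b t : ℤ))) := by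
      by_contra hQ'
      apply hk
      simp only [eta, if_neg hP, if_neg hQ']
    push_neg at hP
    obtain ⟨i, hi1, hdiv⟩ := hP
    have hit : t < i := by
      by_contra hle
      push_neg at hle
      exact hQ i hi1 (dvd_add hdiv ((key i hi1 hle).mul_left k))
    exact dvd_trans (pow_dvd_pow 2 hit.le) (dvd_trans (dvd_mul_right _ _) hdiv)

theorem eta_separated_holes (b : ℕ → ℕ)
    (hodd : ∀ i : ℕ, 1 ≤ i → Odd (b i))
    (hgt : ∀ i : ℕ, 1 ≤ i → 1 < b i)
    (hcop : ∀ i j : ℕ, 1 ≤ i → 1 ≤ j → i ≠ j → Nat.Coprime (b i) (b j)) :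
    ∀ M : ℤ, ∃ T : ℕ, ∀ t : ℕ, T ≤ t →
      ∀ s s' : ℤ, Hole b t s → Hole b t s' → s ≠ s' →
        M ≤ (s' - s) % (pp b t : ℤ) := by
  intro M
  refine ⟨M.toNat, ?_⟩
  intro t ht s s' hs hs' hne
  have hbpos : ∀ i ∈ Finset.Icc 1 t, 0 < b i := fun i hi =>
    lt_trans one_pos (hgt i (Finset.mem_Icc.mp hi).1)
  have hpp : 0 < pp b t := mul_pos (pow_pos two_pos t) (Finset.prod_pos hbpos)
  have hppz : (0 : ℤ) < (pp b t : ℤ) := by exact_mod_cast hpp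
  have h2pp : (2 : ℤ) ^ t ∣ (pp b t : ℤ) := by
    have : (2 : ℕ) ^ t ∣ pp b t := dvd_mul_right _ _
    exact_mod_cast this
  have hds := hole_dvd_pow b t s hs
  have hds' := hole_dvd_pow b t s' hs'
  have hrd : (2 : ℤ) ^ t ∣ (s' - s) % (pp b t : ℤ) := by
    rw [Int.emod_def]
    exact dvd_sub (dvd_sub hds' hds) (h2pp.mul_right _)
  have hr0 : 0 ≤ (s' - s) % (pp b t : ℤ) := Int.emod_nonneg _ (ne_of_gt hppz)
  have hrne : (s' - s) % (pp b t : ℤ) ≠ 0 := by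
    intro h0
    have hdvd : (pp b t : ℤ) ∣ s' - s := Int.dvd_of_emod_eq_zero h0
    have hne' : s' - s ≠ 0 := sub_ne_zero.mpr (Ne.symm hne)
    have habs : (pp b t : ℤ) ≤ |s' - s| :=
      Int.le_of_dvd (abs_pos.mpr hne') ((dvd_abs _ _).mpr hdvd)
    have h1 : |s' - s| < (pp b t : ℤ) := by
      rw [abs_sub_lt_iff]
      constructor <;> [skip; skip] <;>
        linarith [hs.1, hs.2.1, hs'.1, hs'.2.1]
    linarith
  have hrpos : 0 < (s' - s) % (pp b t : ℤ) := lt_of_le_of_ne hr0 (Ne.symm hrne)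
  have h2t : (2 : ℤ) ^ t ≤ (s' - s) % (pp b t : ℤ) := Int.le_of_dvd hrpos hrd
  have hM : M ≤ (2 : ℤ) ^ t := by
    calc M ≤ (M.toNat : ℤ) := Int.self_le_toNat M
    _ ≤ ((2 ^ M.toNat : ℕ) : ℤ) := by exact_mod_cast (Nat.lt_two_pow_self (n := M.toNat)).le
    _ ≤ ((2 ^ t : ℕ) : ℤ) := by exact_mod_cast Nat.pow_le_pow_right (by norm_num) ht
    _ = (2 : ℤ) ^ t := by push_cast; ring
  linarith
end
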